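/- Suppose μ/ν is a skew shape with μ_i = ν_i for some i ∈ [n], and let μ̂, ν̂ be μ, ν with the i-th components removed. Then for all partitions θ of N = |μ/ν| and all w ∈ S_n, Γ^θ_{μ/ν}(w) = Γ^θ_{μ̂/ν̂}(w), where both are computed as characters of S_n (padding μ̂/ν̂ with a zero row at the end). -/

import Mathlib

open Equiv

/-- `T i j` is the entry of a filling in row `i`, column `j` (0-based);
entries outside the diagram of `shape` are `0`.  Rows weakly increase,
columns strictly increase. -/
def IsSSYT (shape : ℕ → ℕ) (T : ℕ → ℕ → ℕ) : Prop :=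
  (∀ i j, j + 1 < shape i → T i j ≤ T i (j + 1)) ∧
  (∀ i j, j < shape (i + 1) → T i j < T (i + 1) j) ∧
  (∀ i j, shape i ≤ j → T i j = 0)

/-- The Kostka number: the number of semistandard Young tableaux of the given
shape in which the entry `m` appears exactly `c m` times. -/
noncomputable def kostka (shape : ℕ → ℕ) (c : ℕ → ℕ) : ℕ :=
  Set.ncard {T : ℕ → ℕ → ℕ | IsSSYT shape T ∧
    ∀ m : ℕ, {p : ℕ × ℕ | p.2 < shape p.1 ∧ T p.1 p.2 = m}.ncard = c m}

open Classical in
/-- Kostka number for an integer content, with the convention that it is `0`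
whenever the content has a negative entry. -/
noncomputable def kostkaZ (shape : ℕ → ℕ) (c : ℕ → ℤ) : ℕ :=
  if ∀ m, 0 ≤ c m then kostka shape (fun m => (c m).toNat) else 0

/-- The hook shape `(N - k, 1, ..., 1)` with `k` trailing rows of length 1. -/
def hookShape (N k : ℕ) : ℕ → ℕ :=
  fun i => if i = 0 then N - k else if i ≤ k then 1 else 0

/-- Extend a sequence indexed by `Fin n` to all of `ℕ` by zeros. -/
def extendSeq {n : ℕ} (a : Fin n → ℤ) : ℕ → ℤ :=
  fun m => if h : m < n then a ⟨m, h⟩ else 0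

/-- The staircase `δ = (n-1, n-2, ..., 1, 0)`. -/
def deltaSeq (n : ℕ) : Fin n → ℤ := fun i => (n : ℤ) - 1 - (i.val : ℤ)

/-- The sequence `μ + δ - w(ν + δ)`, where a permutation acts on sequences by
shuffling: `(w(a))_i = a_{w⁻¹(i)}`. -/
def hatSeq {n : ℕ} (μ ν : Fin n → ℕ) (w : Perm (Fin n)) : Fin n → ℤ :=
  fun i => ((μ i : ℤ) + deltaSeq n i) - ((ν (w⁻¹ i) : ℤ) + deltaSeq n (w⁻¹ i))

/-- `h` is the Hessenberg function of the skew shape `μ/ν`: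
`h j = max { i | μ i - ν j + j - i ≥ 0 }`. -/
def IsHessOf {n : ℕ} (μ ν : Fin n → ℕ) (h : Fin n → Fin n) : Prop :=
  ∀ j : Fin n, (ν j + ((h j : ℕ)) ≤ μ (h j) + (j : ℕ)) ∧
    ∀ i : Fin n, ν j + (i : ℕ) ≤ μ i + (j : ℕ) → i ≤ h j

/-- The indicator `ĥ(w)` of the condition `w(i) ≤ h(i)` for all `i`. -/
def hhat {n : ℕ} (h : Fin n → Fin n) (w : Perm (Fin n)) : ℕ :=
  if ∀ i, w i ≤ h i then 1 else 0

/-- The modified Hessenberg function `h^J`: `h^J(i) = h(i) - 1` when `i ∈ J` and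
`μ_{h(i)} - ν_i + i - h(i) = 0`, and `h^J(i) = h(i)` otherwise. -/
def hJfun {n : ℕ} (μ ν : Fin n → ℕ) (h : Fin n → Fin n) (J : Finset (Fin n)) :
    Fin n → Fin n :=
  fun i => if i ∈ J ∧ μ (h i) + (i : ℕ) = ν i + ((h i : ℕ)) then
      ⟨(h i : ℕ) - 1, Nat.lt_of_le_of_lt (Nat.sub_le _ _) (h i).isLt⟩
    else h i

open Classical in
/-- The conjugacy class of `w` in the symmetric group, as a finset. -/
noncomputable def conjClass {n : ℕ} (w : Perm (Fin n)) : Finset (Perm (Fin n)) :=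
  Finset.univ.filter (fun v => IsConj w v)

/-- The Stanley–Stembridge character
`Γ_h(w) = (n! / |C(w)|) · Σ_{w' ∈ C(w)} ĥ(w')`. -/
noncomputable def GammaH {n : ℕ} (h : Fin n → Fin n) (w : Perm (Fin n)) : ℚ :=
  ((n.factorial : ℚ) / ((conjClass w).card : ℚ)) * ∑ v ∈ conjClass w, (hhat h v : ℚ)

/-- The immanant character
`Γ^θ_{μ/ν}(w) = (n! / |C(w)|) · Σ_{w' ∈ C(w)} K_{θ, μ+δ-w'(ν+δ)}`. -/
noncomputable def GammaTheta {n : ℕ} (shape : ℕ → ℕ) (μ ν : Fin n → ℕ)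
    (w : Perm (Fin n)) : ℚ :=
  ((n.factorial : ℚ) / ((conjClass w).card : ℚ)) *
    ∑ v ∈ conjClass w, (kostkaZ shape (extendSeq (hatSeq μ ν v)) : ℚ)

set_option linter.unusedSectionVars false
namespace BK

variable (shape : ℕ → ℕ) (m : ℕ) (T : ℕ → ℕ → ℕ)

/-- a free `m`-cell -/
def freeLo (i j : ℕ) : Prop := j < shape i ∧ T i j = m ∧ T (i+1) j ≠ m+1
/-- a free `m+1`-cell (note `i - 1 = i` when `i = 0`, making the last
condition automatic there). -/
def freeHi (i j : ℕ) : Prop := j < shape i ∧ T i j = m+1 ∧ T (i-1) j ≠ m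
def free (i j : ℕ) : Prop := freeLo shape m T i j ∨ freeHi shape m T i j

open Classical in
noncomputable def fset (i : ℕ) : Finset ℕ :=
  (Finset.range (shape i)).filter (fun j => free shape m T i j)
open Classical in
noncomputable def loset (i : ℕ) : Finset ℕ :=
  (Finset.range (shape i)).filter (fun j => freeLo shape m T i j)
open Classical in
noncomputable def hiset (i : ℕ) : Finset ℕ :=
  (Finset.range (shape i)).filter (fun j => freeHi shape m T i j)

noncomputable def pstart (i : ℕ) : ℕ :=
  if h : (fset shape m T i).Nonempty then (fset shape m T i).min' h else 0

open Classical in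
noncomputable def bk : ℕ → ℕ → ℕ := fun i j =>
  if free shape m T i j then
    (if j < pstart shape m T i + (hiset shape m T i).card then m else m + 1)
  else T i j

variable {shape m T}

lemma mem_fset {i j : ℕ} : j ∈ fset shape m T i ↔ free shape m T i j := by
  simp only [fset, Finset.mem_filter, Finset.mem_range, and_iff_right_iff_imp]
  rintro (⟨h, _⟩ | ⟨h, _⟩) <;> exact h

lemma mem_loset {i j : ℕ} : j ∈ loset shape m T i ↔ freeLo shape m T i j := by
  simp only [loset, Finset.mem_filter, Finset.mem_range, and_iff_right_iff_imp]
  rintro ⟨h, _⟩; exact h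

lemma mem_hiset {i j : ℕ} : j ∈ hiset shape m T i ↔ freeHi shape m T i j := by
  simp only [hiset, Finset.mem_filter, Finset.mem_range, and_iff_right_iff_imp]
  rintro ⟨h, _⟩; exact h

section props
variable (hsh : Antitone shape) (hT : IsSSYT shape T)
include hT

/-- rows are weakly increasing -/
lemma row_mono {i j k : ℕ} (hjk : j ≤ k) (hk : k < shape i) : T i j ≤ T i k := by
  induction k with
  | zero => cases Nat.le_zero.mp hjk; exact le_refl _
  | succ k ih =>
    rcases Nat.eq_or_lt_of_le hjk with rfl | h
    · exact le_refl _
    · exact (ih (Nat.lt_succ_iff.mp h) (Nat.lt_of_succ_lt hk)).trans (hT.1 i k hk)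

lemma inside {i j : ℕ} (h : T i j ≠ 0) : j < shape i := by
  by_contra hc; exact h (hT.2.2 i j (not_lt.mp hc))

/-- free cells in a row form an interval -/
lemma free_convex (hsh : Antitone shape) {i j j' x : ℕ} (hj : free shape m T i j)
    (hj' : free shape m T i j') (h1 : j ≤ x) (h2 : x ≤ j') : free shape m T i x := by
  have hjlt : j < shape i := by rcases hj with ⟨h, _⟩ | ⟨h, _⟩ <;> exact h
  have hj'lt : j' < shape i := by rcases hj' with ⟨h, _⟩ | ⟨h, _⟩ <;> exact h
  have hxlt : x < shape i := Nat.lt_of_le_of_lt h2 hj'lt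
  have hTjx : T i j ≤ T i x := row_mono hT h1 hxlt
  have hTxj' : T i x ≤ T i j' := row_mono hT h2 hj'lt
  have hTjm : m ≤ T i j := by rcases hj with ⟨_, h, _⟩ | ⟨_, h, _⟩ <;> omega
  have hTj'm : T i j' ≤ m + 1 := by rcases hj' with ⟨_, h, _⟩ | ⟨_, h, _⟩ <;> omega
  have hx : T i x = m ∨ T i x = m + 1 := by omega
  rcases hx with hx | hx
  · -- value m : show freeLo
    left
    refine ⟨hxlt, hx, fun hpair => ?_⟩
    -- T (i+1) x = m+1 : then j is paired too, contradiction
    have hTj : T i j = m := by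
      rcases hj with ⟨_, h, _⟩ | ⟨_, h, _⟩
      · exact h
      · omega
    have hxin : x < shape (i+1) := inside hT (by omega : T (i+1) x ≠ 0)
    have hjin : j < shape (i+1) := Nat.lt_of_le_of_lt h1 hxin
    have h3 : T (i+1) j ≤ T (i+1) x := row_mono hT h1 hxin
    have h4 : T i j < T (i+1) j := hT.2.1 i j hjin
    have : T (i+1) j = m + 1 := by omega
    rcases hj with ⟨_, _, hfree⟩ | ⟨_, hv, _⟩
    · exact hfree this
    · omega
  · -- value m+1 : show freeHi
    right
    refine ⟨hxlt, hx, fun hpair => ?_⟩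
    -- T (i-1) x = m : then j' is paired too
    rcases Nat.eq_zero_or_pos i with rfl | hi
    · simp only [Nat.zero_sub] at hpair; omega
    obtain ⟨k, rfl⟩ : ∃ k, i = k + 1 := ⟨i - 1, by omega⟩
    simp only [Nat.add_sub_cancel] at hpair
    have hTj' : T (k+1) j' = m + 1 := by omega
    have hfree' : T k j' ≠ m := by
      rcases hj' with ⟨_, hv, _⟩ | ⟨_, _, hfree⟩
      · omega
      · simpa using hfree
    have hj'ltk : j' < shape k := lt_of_lt_of_le hj'lt (hsh (Nat.le_succ k))
    have h5 : T k x ≤ T k j' := row_mono hT h2 hj'ltk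
    have h6 : T k j' < T (k+1) j' := hT.2.1 k j' hj'lt
    omega


/-- any `freeLo` position is left of any `freeHi` position -/
lemma lo_lt_hi {i j j' : ℕ} (hj : freeLo shape m T i j) (hj' : freeHi shape m T i j') :
    j < j' := by
  by_contra hc
  have := row_mono hT (not_lt.mp hc) hj.1
  have := hj.2.1; have := hj'.2.1
  omega

end props

/-- a convex nonempty finset of naturals is an interval -/
lemma convex_eq_Ico (S : Finset ℕ) (hne : S.Nonempty)
    (hconv : ∀ a ∈ S, ∀ b ∈ S, ∀ x, a ≤ x → x ≤ b → x ∈ S) :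
    S = Finset.Ico (S.min' hne) (S.min' hne + S.card) := by
  have h1 : S = Finset.Icc (S.min' hne) (S.max' hne) := by
    apply Finset.Subset.antisymm
    · intro x hx
      exact Finset.mem_Icc.mpr ⟨S.min'_le x hx, S.le_max' x hx⟩
    · intro x hx
      rw [Finset.mem_Icc] at hx
      exact hconv _ (S.min'_mem hne) _ (S.max'_mem hne) x hx.1 hx.2
  have hmm : S.min' hne ≤ S.max' hne := S.min'_le _ (S.max'_mem hne)
  have key : ∀ a b : ℕ, a ≤ b → S = Finset.Icc a b → S = Finset.Ico a (a + S.card) := by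
    intro a b hab hS
    have hcard : S.card = b + 1 - a := by rw [hS, Nat.card_Icc]
    rw [hcard, hS]
    ext x
    simp only [Finset.mem_Icc, Finset.mem_Ico]
    omega
  exact key _ _ hmm h1

section struct
variable (hsh : Antitone shape) (hT : IsSSYT shape T)
include hsh hT

omit hsh hT in
lemma fset_eq_union (i : ℕ) : fset shape m T i = loset shape m T i ∪ hiset shape m T i := by
  ext x
  simp only [mem_fset, mem_loset, mem_hiset, Finset.mem_union, free]

omit hsh hT in
lemma lo_hi_disjoint (i : ℕ) : Disjoint (loset shape m T i) (hiset shape m T i) := by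
  rw [Finset.disjoint_left]
  intro x hx hx'
  rw [mem_loset] at hx; rw [mem_hiset] at hx'
  have := hx.2.1; have := hx'.2.1
  omega

omit hsh hT in
lemma card_fset (i : ℕ) :
    (fset shape m T i).card = (loset shape m T i).card + (hiset shape m T i).card := by
  rw [fset_eq_union (shape := shape) (m := m) (T := T) i, Finset.card_union_of_disjoint (lo_hi_disjoint (shape := shape) (m := m) (T := T) i)]

lemma fset_eq_Ico (i : ℕ) :
    fset shape m T i = Finset.Ico (pstart shape m T i)
      (pstart shape m T i + (fset shape m T i).card) := by
  rcases Finset.eq_empty_or_nonempty (fset shape m T i) with he | hne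
  · rw [he]; simp [he]
  · rw [pstart, dif_pos hne]
    exact convex_eq_Ico _ hne (fun a ha b hb x h1 h2 =>
      mem_fset.mpr (free_convex hT hsh (mem_fset.mp ha) (mem_fset.mp hb) h1 h2))

lemma loset_eq_Ico (i : ℕ) :
    loset shape m T i = Finset.Ico (pstart shape m T i)
      (pstart shape m T i + (loset shape m T i).card) := by
  rcases Finset.eq_empty_or_nonempty (loset shape m T i) with he | hne
  · rw [he]; simp [he]
  · have hconv : ∀ a ∈ loset shape m T i, ∀ b ∈ loset shape m T i, ∀ x, a ≤ x → x ≤ b →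
        x ∈ loset shape m T i := by
      intro a ha b hb x h1 h2
      rw [mem_loset] at ha hb ⊢
      have hfree : free shape m T i x :=
        free_convex hT hsh (Or.inl ha) (Or.inl hb) h1 h2
      have hxlt : x < shape i := by
        rcases hfree with ⟨h, _⟩ | ⟨h, _⟩ <;> exact h
      have h3 : T i a ≤ T i x := row_mono hT h1 hxlt
      have h4 : T i x ≤ T i b := row_mono hT h2 hb.1
      rcases hfree with hf | hf
      · exact hf
      · have := ha.2.1; have := hb.2.1; have := hf.2.1; omega
    have := convex_eq_Ico _ hne hconv
    -- min' of loset = pstart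
    have hfne : (fset shape m T i).Nonempty := by
      obtain ⟨x, hx⟩ := hne
      exact ⟨x, mem_fset.mpr (Or.inl (mem_loset.mp hx))⟩
    have hps : pstart shape m T i = (fset shape m T i).min' hfne := by
      rw [pstart, dif_pos hfne]
    have hmin : (loset shape m T i).min' hne = (fset shape m T i).min' hfne := by
      apply le_antisymm
      · -- fset min is in loset (since los are before his)
        have hm := (fset shape m T i).min'_mem hfne
        rw [mem_fset] at hm
        rcases hm with hm | hm
        · exact (loset shape m T i).min'_le _ (mem_loset.mpr hm)
        · -- min of fset is a hi; but a lo exists and is smaller: contradiction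
          exfalso
          obtain ⟨x, hx⟩ := hne
          have hlt := lo_lt_hi hT (mem_loset.mp hx) hm
          have := (fset shape m T i).min'_le x (mem_fset.mpr (Or.inl (mem_loset.mp hx)))
          omega
      · exact (fset shape m T i).min'_le _
          (mem_fset.mpr (Or.inl (mem_loset.mp ((loset shape m T i).min'_mem hne))))
    rw [hps, ← hmin]
    exact this

lemma hiset_eq_Ico (i : ℕ) :
    hiset shape m T i = Finset.Ico (pstart shape m T i + (loset shape m T i).card)
      (pstart shape m T i + (loset shape m T i).card + (hiset shape m T i).card) := by
  have h1 := fset_eq_Ico hsh hT (m := m) i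
  have h2 := loset_eq_Ico hsh hT (m := m) i
  have h3 := fset_eq_union (shape := shape) (m := m) (T := T) i
  have h4 := card_fset (shape := shape) (m := m) (T := T) i
  have hdisj := lo_hi_disjoint (shape := shape) (m := m) (T := T) i
  ext x
  have hf : x ∈ fset shape m T i ↔ (pstart shape m T i ≤ x ∧
      x < pstart shape m T i + ((loset shape m T i).card + (hiset shape m T i).card)) := by
    conv_lhs => rw [h1]
    rw [Finset.mem_Ico, h4]
  have hl : x ∈ loset shape m T i ↔ (pstart shape m T i ≤ x ∧
      x < pstart shape m T i + (loset shape m T i).card) := by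
    conv_lhs => rw [h2]
    rw [Finset.mem_Ico]
  have hu : x ∈ hiset shape m T i ↔ (x ∈ fset shape m T i ∧ x ∉ loset shape m T i) := by
    constructor
    · intro hx
      refine ⟨by rw [h3]; exact Finset.mem_union_right _ hx, fun hc => ?_⟩
      exact (Finset.disjoint_left.mp hdisj) hc hx
    · intro ⟨hx1, hx2⟩
      rw [h3] at hx1
      rcases Finset.mem_union.mp hx1 with h | h
      · exact absurd h hx2
      · exact h
  rw [hu, hf, hl, Finset.mem_Ico]
  omega

end struct

section bkmap
variable (hsh : Antitone shape) (hT : IsSSYT shape T)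

omit hsh hT in
lemma bk_of_free {i j : ℕ} (h : free shape m T i j) :
    bk shape m T i j =
      if j < pstart shape m T i + (hiset shape m T i).card then m else m + 1 := by
  rw [bk, if_pos h]

omit hsh hT in
lemma bk_of_not_free {i j : ℕ} (h : ¬ free shape m T i j) : bk shape m T i j = T i j := by
  rw [bk, if_neg h]

omit hsh hT in
lemma free_lt (h : free shape m T i j) : j < shape i := by
  rcases h with ⟨h, _⟩ | ⟨h, _⟩ <;> exact h

omit hsh hT in
lemma free_val (h : free shape m T i j) : T i j = m ∨ T i j = m + 1 := by
  rcases h with ⟨_, h, _⟩ | ⟨_, h, _⟩ <;> [left; right] <;> exact h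

omit hsh hT in
lemma free_bk_bounds (h : free shape m T i j) :
    m ≤ bk shape m T i j ∧ bk shape m T i j ≤ m + 1 := by
  rw [bk_of_free h]; split_ifs <;> omega

omit hsh hT in
lemma freeHi_iff_of_free (h : free shape m T i j) :
    freeHi shape m T i j ↔ T i j = m + 1 := by
  constructor
  · exact fun h' => h'.2.1
  · intro hv
    rcases h with ⟨_, hv', _⟩ | h'
    · omega
    · exact h'

omit hsh hT in
lemma freeLo_iff_of_free (h : free shape m T i j) :
    freeLo shape m T i j ↔ T i j = m := by
  constructor
  · exact fun h' => h'.2.1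
  · intro hv
    rcases h with h' | ⟨_, hv', _⟩
    · exact h'
    · omega

include hsh hT

/-- when a free cell is followed by a non-free cell in the same row, the next
value is at least `m+1` -/
lemma next_ge (i j : ℕ) (hj : j + 1 < shape i) (f1 : free shape m T i j)
    (f2 : ¬ free shape m T i (j+1)) : m + 1 ≤ T i (j+1) := by
  have h1 : T i j ≤ T i (j+1) := hT.1 i j hj
  have hv := free_val f1
  by_contra hc
  have hv2 : T i (j+1) = m := by omega
  have hvj : T i j = m := by omega
  -- j+1 not free, value m, inside ⇒ paired
  have hpair : T (i+1) (j+1) = m + 1 := by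
    by_contra hp
    exact f2 (Or.inl ⟨hj, hv2, hp⟩)
  have hin : j + 1 < shape (i+1) := inside hT (by omega : T (i+1) (j+1) ≠ 0)
  have h2 : T (i+1) j ≤ T (i+1) (j+1) := row_mono hT (Nat.le_succ j) hin
  have h3 : T i j < T (i+1) j := hT.2.1 i j (Nat.lt_of_succ_lt hin)
  have h4 : T (i+1) j = m + 1 := by omega
  exact ((freeLo_iff_of_free f1).mpr hvj).2.2 h4

/-- when a non-free cell is followed by a free cell, the first value
is at most `m` -/
lemma prev_le (i j : ℕ) (hj : j + 1 < shape i) (f1 : ¬ free shape m T i j)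
    (f2 : free shape m T i (j+1)) : T i j ≤ m := by
  have h1 : T i j ≤ T i (j+1) := hT.1 i j hj
  have hv := free_val f2
  by_contra hc
  have hv2 : T i (j+1) = m + 1 := by omega
  have hvj : T i j = m + 1 := by omega
  -- j not free, value m+1, inside ⇒ paired
  have hpair : T (i-1) j = m := by
    by_contra hp
    exact f1 (Or.inr ⟨Nat.lt_of_succ_lt hj, hvj, hp⟩)
  rcases Nat.eq_zero_or_pos i with rfl | hi
  · simp only [Nat.zero_sub] at hpair; omega
  obtain ⟨k, rfl⟩ : ∃ k, i = k + 1 := ⟨i - 1, by omega⟩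
  simp only [Nat.add_sub_cancel] at hpair
  have hjk : j + 1 < shape k := lt_of_lt_of_le hj (hsh (Nat.le_succ k))
  have h5 : T k j ≤ T k (j+1) := row_mono hT (Nat.le_succ j) hjk
  have h6 : T k (j+1) < T (k+1) (j+1) := hT.2.1 k (j+1) hj
  exact ((freeHi_iff_of_free f2).mpr hv2).2.2 (by simp only [Nat.add_sub_cancel]; omega)

/-- free cells can never be vertically adjacent -/
lemma not_free_vert (i j : ℕ) (hj : j < shape (i+1)) (f1 : free shape m T i j)
    (f2 : free shape m T (i+1) j) : False := by
  have h1 : T i j < T (i+1) j := hT.2.1 i j hj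
  have hv1 := free_val f1
  have hv2 := free_val f2
  have hv1' : T i j = m := by omega
  have hv2' : T (i+1) j = m + 1 := by omega
  exact ((freeLo_iff_of_free f1).mpr hv1').2.2 hv2'

lemma bk_isSSYT : IsSSYT shape (bk shape m T) := by
  refine ⟨?_, ?_, ?_⟩
  · -- rows weakly increase
    intro i j hj
    by_cases f1 : free shape m T i j <;> by_cases f2 : free shape m T i (j+1)
    · rw [bk_of_free f1, bk_of_free f2]
      split_ifs <;> omega
    · rw [bk_of_free f1, bk_of_not_free f2]
      have := next_ge hsh hT i j hj f1 f2
      split_ifs <;> omega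
    · have hple := prev_le hsh hT i j hj f1 f2
      rw [bk_of_not_free f1, bk_of_free f2]
      split_ifs <;> omega
    · rw [bk_of_not_free f1, bk_of_not_free f2]
      exact hT.1 i j hj
  · -- columns strictly increase
    intro i j hj
    by_cases f1 : free shape m T i j <;> by_cases f2 : free shape m T (i+1) j
    · exact absurd (not_free_vert hsh hT i j hj f1 f2) (by simp)
    · -- f1 free, below not free
      rw [bk_of_free f1, bk_of_not_free f2]
      have h1 : T i j < T (i+1) j := hT.2.1 i j hj
      have hv1 := free_val f1
      have h2 : m + 2 ≤ T (i+1) j := by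
        by_contra hc
        have hv2 : T (i+1) j = m + 1 := by omega
        have hv1' : T i j = m := by omega
        exact ((freeLo_iff_of_free f1).mpr hv1').2.2 hv2
      split_ifs <;> omega
    · -- f1 not free, below free
      rw [bk_of_not_free f1, bk_of_free f2]
      have h1 : T i j < T (i+1) j := hT.2.1 i j hj
      have hv2 := free_val f2
      have h2 : T i j < m := by
        by_contra hc
        have hv1 : T i j = m := by omega
        have hv2' : T (i+1) j = m + 1 := by omega
        exact ((freeHi_iff_of_free f2).mpr hv2').2.2 (by simpa using hv1)
      split_ifs <;> omega
    · rw [bk_of_not_free f1, bk_of_not_free f2]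
      exact hT.2.1 i j hj
  · -- zeros outside
    intro i j hj
    rw [bk_of_not_free (fun h => by have := free_lt h; omega)]
    exact hT.2.2 i j hj

lemma free_bk_iff (i j : ℕ) :
    free shape m (bk shape m T) i j ↔ free shape m T i j := by
  constructor
  · -- new free ⇒ old free
    intro hf'
    by_contra hnf
    have heq : bk shape m T i j = T i j := bk_of_not_free hnf
    have hlt := free_lt hf'
    have hv := free_val hf'
    rw [heq] at hv
    rcases hv with hv | hv
    · -- T i j = m ; not free ⇒ paired below
      have hpair : T (i+1) j = m + 1 := by
        by_contra hp
        exact hnf (Or.inl ⟨hlt, hv, hp⟩)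
      -- (i+1,j) is paired-hi hence not free
      have hnf2 : ¬ free shape m T (i+1) j := by
        rintro (⟨_, hv2, _⟩ | ⟨_, _, hfr⟩)
        · omega
        · exact hfr (by simpa using hv)
      have heq2 : bk shape m T (i+1) j = m + 1 := by
        rw [bk_of_not_free hnf2]; exact hpair
      rcases hf' with ⟨_, hv', hfr⟩ | ⟨_, hv', _⟩
      · exact hfr heq2
      · rw [heq] at hv'; omega
    · -- T i j = m + 1; not free ⇒ paired above
      have hpair : T (i-1) j = m := by
        by_contra hp
        exact hnf (Or.inr ⟨hlt, hv, hp⟩)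
      rcases Nat.eq_zero_or_pos i with rfl | hi
      · simp only [Nat.zero_sub] at hpair; omega
      obtain ⟨k, rfl⟩ : ∃ k, i = k + 1 := ⟨i - 1, by omega⟩
      simp only [Nat.add_sub_cancel] at hpair
      have hnf2 : ¬ free shape m T k j := by
        rintro (⟨_, _, hfr⟩ | ⟨_, hv2, _⟩)
        · exact hfr hv
        · omega
      have heq2 : bk shape m T k j = m := by
        rw [bk_of_not_free hnf2]; exact hpair
      rcases hf' with ⟨_, hv', _⟩ | ⟨_, hv', hfr⟩
      · rw [heq] at hv'; omega
      · exact hfr (by simpa using heq2)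
  · -- old free ⇒ new free
    intro hf
    have hlt := free_lt hf
    have hb := free_bk_bounds (shape := shape) (m := m) hf
    have hv' : bk shape m T i j = m ∨ bk shape m T i j = m + 1 := by omega
    rcases hv' with hv' | hv'
    · -- new value m : freeLo for bk
      left
      refine ⟨hlt, hv', fun hp => ?_⟩
      by_cases f2 : free shape m T (i+1) j
      · exact not_free_vert hsh hT i j (free_lt f2) hf f2
      · rw [bk_of_not_free f2] at hp
        have hin : j < shape (i+1) := inside hT (by omega : T (i+1) j ≠ 0)
        have h1 : T i j < T (i+1) j := hT.2.1 i j hin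
        have hv := free_val hf
        have hvm : T i j = m := by omega
        exact ((freeLo_iff_of_free hf).mpr hvm).2.2 hp
    · -- new value m+1 : freeHi for bk
      right
      refine ⟨hlt, hv', fun hp => ?_⟩
      rcases Nat.eq_zero_or_pos i with rfl | hi
      · simp only [Nat.zero_sub] at hp; omega
      obtain ⟨k, rfl⟩ : ∃ k, i = k + 1 := ⟨i - 1, by omega⟩
      simp only [Nat.add_sub_cancel] at hp
      by_cases f2 : free shape m T k j
      · exact not_free_vert hsh hT k j hlt f2 hf
      · rw [bk_of_not_free f2] at hp
        have h1 : T k j < T (k+1) j := hT.2.1 k j hlt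
        have hv := free_val hf
        have hvm : T (k+1) j = m + 1 := by omega
        exact ((freeHi_iff_of_free hf).mpr hvm).2.2 (by simpa using hp)


lemma fset_bk (i : ℕ) : fset shape m (bk shape m T) i = fset shape m T i := by
  ext x
  rw [mem_fset, mem_fset, free_bk_iff hsh hT]

lemma pstart_bk (i : ℕ) : pstart shape m (bk shape m T) i = pstart shape m T i := by
  unfold pstart
  congr 1 <;> rw [fset_bk hsh hT]

lemma hiset_bk (i : ℕ) : hiset shape m (bk shape m T) i =
    Finset.Ico (pstart shape m T i + (hiset shape m T i).card)
      (pstart shape m T i + (loset shape m T i).card + (hiset shape m T i).card) := by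
  have hT' := bk_isSSYT hsh hT (m := m)
  ext x
  rw [mem_hiset]
  constructor
  · intro hx
    have hfree' : free shape m (bk shape m T) i x := Or.inr hx
    have hfree : free shape m T i x := (free_bk_iff hsh hT i x).mp hfree'
    have hxf : x ∈ fset shape m T i := mem_fset.mpr hfree
    rw [fset_eq_Ico hsh hT, Finset.mem_Ico, card_fset (shape := shape) (m := m) (T := T)] at hxf
    have hval : bk shape m T i x = m + 1 := hx.2.1
    rw [bk_of_free hfree] at hval
    have : ¬ x < pstart shape m T i + (hiset shape m T i).card := by
      intro hc; rw [if_pos hc] at hval; omega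
    rw [Finset.mem_Ico]
    omega
  · intro hx
    rw [Finset.mem_Ico] at hx
    have hxf : x ∈ fset shape m T i := by
      rw [fset_eq_Ico hsh hT, Finset.mem_Ico, card_fset (shape := shape) (m := m) (T := T)]
      omega
    have hfree : free shape m T i x := mem_fset.mp hxf
    have hval : bk shape m T i x = m + 1 := by
      rw [bk_of_free hfree, if_neg (by omega)]
    exact (freeHi_iff_of_free ((free_bk_iff hsh hT i x).mpr hfree)).mpr hval

lemma card_hiset_bk (i : ℕ) :
    (hiset shape m (bk shape m T) i).card = (loset shape m T i).card := by
  rw [hiset_bk hsh hT, Nat.card_Ico]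
  omega

lemma bk_bk : bk shape m (bk shape m T) = T := by
  funext i j
  by_cases hf : free shape m T i j
  · have hf' : free shape m (bk shape m T) i j := (free_bk_iff hsh hT i j).mpr hf
    rw [bk_of_free hf', pstart_bk hsh hT, card_hiset_bk hsh hT]
    have hval := free_val hf
    have hjlo : j ∈ loset shape m T i ↔
        (pstart shape m T i ≤ j ∧ j < pstart shape m T i + (loset shape m T i).card) := by
      conv_lhs => rw [loset_eq_Ico hsh hT]
      rw [Finset.mem_Ico]
    have hjf : pstart shape m T i ≤ j := by
      have := mem_fset.mpr hf
      rw [fset_eq_Ico hsh hT, Finset.mem_Ico] at this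
      exact this.1
    rcases hval with hval | hval
    · have : j ∈ loset shape m T i := mem_loset.mpr ((freeLo_iff_of_free hf).mpr hval)
      rw [hjlo] at this
      rw [if_pos (by omega), hval]
    · have : j ∉ loset shape m T i := by
        intro hc
        have := (mem_loset.mp hc).2.1
        omega
      rw [hjlo] at this
      rw [if_neg (by omega), hval]
  · have hf' : ¬ free shape m (bk shape m T) i j :=
      fun hc => hf ((free_bk_iff hsh hT i j).mp hc)
    rw [bk_of_not_free hf', bk_of_not_free hf]


lemma shift_mem_hiset {i j : ℕ} (hfree : free shape m T i j)
    (h2 : j < pstart shape m T i + (hiset shape m T i).card) :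
    freeHi shape m T i (j + (loset shape m T i).card) := by
  have hxf := mem_fset.mpr hfree
  rw [fset_eq_Ico hsh hT, Finset.mem_Ico,
    card_fset (shape := shape) (m := m) (T := T)] at hxf
  have : j + (loset shape m T i).card ∈ hiset shape m T i := by
    rw [hiset_eq_Ico hsh hT, Finset.mem_Ico]; omega
  exact mem_hiset.mp this

lemma ncard_bk_m :
    {q : ℕ × ℕ | q.2 < shape q.1 ∧ bk shape m T q.1 q.2 = m}.ncard
      = {q : ℕ × ℕ | q.2 < shape q.1 ∧ T q.1 q.2 = m + 1}.ncard := by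
  classical
  set D := {q : ℕ × ℕ | q.2 < shape q.1 ∧ bk shape m T q.1 q.2 = m} with hD
  set E := {q : ℕ × ℕ | q.2 < shape q.1 ∧ T q.1 q.2 = m + 1} with hE
  set Φ : ℕ × ℕ → ℕ × ℕ := fun q =>
    if free shape m T q.1 q.2 then (q.1, q.2 + (loset shape m T q.1).card)
    else (q.1 + 1, q.2) with hΦ
  -- characterize D-membership for free cells
  have memD_free : ∀ i j, free shape m T i j → ((i, j) ∈ D ↔
      j < pstart shape m T i + (hiset shape m T i).card) := by
    intro i j hfree
    have hflt := free_lt hfree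
    rw [hD, Set.mem_setOf_eq]
    simp only
    rw [bk_of_free hfree]
    constructor
    · rintro ⟨_, hv⟩
      by_contra h
      rw [if_neg h] at hv
      omega
    · intro h
      exact ⟨hflt, by rw [if_pos h]⟩
  have himg : Φ '' D = E := by
    apply Set.Subset.antisymm
    · rintro _ ⟨⟨i, j⟩, hq, rfl⟩
      by_cases hfree : free shape m T i j
      · have h2 := (memD_free i j hfree).mp hq
        have hHi := shift_mem_hiset hsh hT hfree h2
        rw [hΦ]
        simp only [hfree, if_pos]
        exact ⟨hHi.1, hHi.2.1⟩
      · obtain ⟨hlt, hv⟩ := hq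
        rw [bk_of_not_free hfree] at hv
        have hpair : T (i+1) j = m + 1 := by
          by_contra hp
          exact hfree (Or.inl ⟨hlt, hv, hp⟩)
        have hin : j < shape (i+1) := inside hT (by omega : T (i+1) j ≠ 0)
        rw [hΦ]
        simp only [hfree, if_neg, if_false]
        exact ⟨hin, hpair⟩
    · rintro ⟨i, j⟩ ⟨hlt, hv⟩
      dsimp only at hlt hv
      by_cases hfree : free shape m T i j
      · -- it is a free hi cell; preimage is (i, j - loset.card)
        have hHi : freeHi shape m T i j := (freeHi_iff_of_free hfree).mpr hv
        have hjh : j ∈ hiset shape m T i := mem_hiset.mpr hHi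
        rw [hiset_eq_Ico hsh hT, Finset.mem_Ico] at hjh
        set r := (loset shape m T i).card
        have hjr : r ≤ j := by omega
        have hfr : free shape m T i (j - r) := by
          have : j - r ∈ fset shape m T i := by
            rw [fset_eq_Ico hsh hT, Finset.mem_Ico,
              card_fset (shape := shape) (m := m) (T := T)]
            omega
          exact mem_fset.mp this
        refine ⟨(i, j - r), ?_, ?_⟩
        · rw [memD_free i (j - r) hfr]
          omega
        · rw [hΦ]
          simp only [hfr, if_pos]
          have : j - r + r = j := by omega
          rw [this]
      · -- paired hi cell; preimage is the cell above
        have hpair : T (i-1) j = m := by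
          by_contra hp
          exact hfree (Or.inr ⟨hlt, hv, hp⟩)
        rcases Nat.eq_zero_or_pos i with rfl | hi
        · simp only [Nat.zero_sub] at hpair; omega
        obtain ⟨k, rfl⟩ : ∃ k, i = k + 1 := ⟨i - 1, by omega⟩
        simp only [Nat.add_sub_cancel] at hpair
        have hnf : ¬ free shape m T k j := by
          rintro (⟨_, _, hfr⟩ | ⟨_, hv2, _⟩)
          · exact hfr hv
          · omega
        refine ⟨(k, j), ⟨lt_of_lt_of_le hlt (hsh (Nat.le_succ k)), ?_⟩, ?_⟩
        · rw [bk_of_not_free hnf]; exact hpair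
        · rw [hΦ]
          simp only [hnf, if_neg, if_false]
  have hinj : Set.InjOn Φ D := by
    rintro ⟨i1, j1⟩ h1 ⟨i2, j2⟩ h2 heq
    rw [hΦ] at heq
    by_cases f1 : free shape m T i1 j1 <;> by_cases f2 : free shape m T i2 j2 <;>
      simp only [f1, f2, if_pos, if_neg, if_false, if_true, Prod.mk.injEq] at heq
    · obtain ⟨rfl, h⟩ := heq
      have : j1 = j2 := by omega
      rw [this]
    · -- image of free is a free cell; image of non-free is a paired cell
      exfalso
      have hHi := shift_mem_hiset hsh hT f1 ((memD_free i1 j1 f1).mp h1)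
      obtain ⟨hlt2, hv2⟩ := h2
      rw [bk_of_not_free f2] at hv2
      have hpair : T (i2+1) j2 = m + 1 := by
        by_contra hp
        exact f2 (Or.inl ⟨hlt2, hv2, hp⟩)
      obtain ⟨he1, he2⟩ := heq
      subst he1
      rw [he2] at hHi
      exact hHi.2.2 (by simp only [Nat.add_sub_cancel]; exact hv2)
    · exfalso
      have hHi := shift_mem_hiset hsh hT f2 ((memD_free i2 j2 f2).mp h2)
      obtain ⟨hlt1, hv1⟩ := h1
      rw [bk_of_not_free f1] at hv1
      have hpair : T (i1+1) j1 = m + 1 := by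
        by_contra hp
        exact f1 (Or.inl ⟨hlt1, hv1, hp⟩)
      obtain ⟨he1, he2⟩ := heq
      subst he1
      rw [← he2] at hHi
      exact hHi.2.2 (by simp only [Nat.add_sub_cancel]; exact hv1)
    · obtain ⟨h, rfl⟩ := heq
      have : i1 = i2 := by omega
      rw [this]
  rw [← himg, Set.ncard_image_of_injOn hinj]


lemma bk_content (x : ℕ) :
    {q : ℕ × ℕ | q.2 < shape q.1 ∧ bk shape m T q.1 q.2 = x}.ncard
      = {q : ℕ × ℕ | q.2 < shape q.1 ∧ T q.1 q.2 = Equiv.swap m (m+1) x}.ncard := by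
  rcases eq_or_ne x m with rfl | hxm
  · rw [Equiv.swap_apply_left]
    exact ncard_bk_m hsh hT
  rcases eq_or_ne x (m+1) with rfl | hxm1
  · rw [Equiv.swap_apply_right]
    have hT' := bk_isSSYT hsh hT (m := m)
    have := ncard_bk_m hsh hT' (m := m)
    rw [bk_bk hsh hT] at this
    exact this.symm
  · rw [Equiv.swap_apply_of_ne_of_ne hxm hxm1]
    congr 1
    ext ⟨i, j⟩
    simp only [Set.mem_setOf_eq]
    constructor
    · rintro ⟨hlt, hv⟩
      refine ⟨hlt, ?_⟩
      by_cases hfree : free shape m T i j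
      · exfalso
        have := free_bk_bounds (shape := shape) (m := m) hfree
        omega
      · rw [bk_of_not_free hfree] at hv
        exact hv
    · rintro ⟨hlt, hv⟩
      refine ⟨hlt, ?_⟩
      by_cases hfree : free shape m T i j
      · exfalso
        have := free_val hfree
        omega
      · rw [bk_of_not_free hfree]
        exact hv

end bkmap
end BK

open BK in
lemma kostka_swap (shape : ℕ → ℕ) (hsh : Antitone shape) (m : ℕ) (c : ℕ → ℕ) :
    kostka shape (fun x => c (Equiv.swap m (m+1) x)) = kostka shape c := by
  classical
  set S : (ℕ → ℕ) → Set (ℕ → ℕ → ℕ) := fun c' => {T | IsSSYT shape T ∧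
    ∀ x : ℕ, {p : ℕ × ℕ | p.2 < shape p.1 ∧ T p.1 p.2 = x}.ncard = c' x} with hS
  have hmap : ∀ c' : ℕ → ℕ, ∀ T ∈ S c', bk shape m T ∈ S (fun x => c' (Equiv.swap m (m+1) x)) := by
    rintro c' T ⟨hT, hc⟩
    exact ⟨bk_isSSYT hsh hT, fun x => by rw [bk_content hsh hT x, hc _]⟩
  have hswapswap : ∀ c' : ℕ → ℕ,
      (fun x => (fun y => c' (Equiv.swap m (m+1) y)) (Equiv.swap m (m+1) x)) = c' := by
    intro c'
    funext x
    simp [Equiv.swap_apply_self]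
  have himg : bk shape m '' (S c) = S (fun x => c (Equiv.swap m (m+1) x)) := by
    apply Set.Subset.antisymm
    · rintro _ ⟨T, hT, rfl⟩
      exact hmap c T hT
    · intro T hT
      have h2 := hmap _ T hT
      rw [hswapswap] at h2
      exact ⟨bk shape m T, h2, bk_bk hsh hT.1⟩
  have hinj : Set.InjOn (bk shape m) (S c) := by
    intro T1 h1 T2 h2 heq
    have := bk_bk hsh h1.1 (m := m)
    rw [heq, bk_bk hsh h2.1] at this
    exact this.symm
  rw [kostka, kostka]
  show (S (fun x => c (Equiv.swap m (m+1) x))).ncard = (S c).ncard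
  rw [← himg, Set.ncard_image_of_injOn hinj]

lemma kostkaZ_swap (shape : ℕ → ℕ) (hsh : Antitone shape) (m : ℕ) (c : ℕ → ℤ) :
    kostkaZ shape (fun x => c (Equiv.swap m (m+1) x)) = kostkaZ shape c := by
  classical
  by_cases h : ∀ x, 0 ≤ c x
  · have h' : ∀ x, 0 ≤ c (Equiv.swap m (m+1) x) := fun x => h _
    rw [kostkaZ, kostkaZ, if_pos h, if_pos h']
    exact kostka_swap shape hsh m (fun x => (c x).toNat)
  · have h' : ¬ ∀ x, 0 ≤ c (Equiv.swap m (m+1) x) := by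
      intro hc
      apply h
      intro x
      have := hc (Equiv.swap m (m+1) x)
      rwa [Equiv.swap_apply_self] at this
    rw [kostkaZ, kostkaZ, if_neg h, if_neg h']

/-- the cycle `(i, i+1, ..., n)` sending `n ↦ i` and `x ↦ x+1` for `i ≤ x < n`. -/
def cyc (i n : ℕ) : ℕ → ℕ := fun x => if x = n then i else if i ≤ x ∧ x < n then x + 1 else x

lemma cyc_step {i n : ℕ} (h : i < n) (x : ℕ) :
    cyc i n x = Equiv.swap i (i+1) (cyc (i+1) n x) := by
  unfold cyc
  rcases eq_or_ne x n with rfl | hxn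
  · rw [if_pos rfl, if_pos rfl, Equiv.swap_apply_right]
  · rw [if_neg hxn, if_neg hxn]
    by_cases h1 : i + 1 ≤ x ∧ x < n
    · rw [if_pos h1, if_pos ⟨by omega, h1.2⟩,
        Equiv.swap_apply_of_ne_of_ne (by omega) (by omega)]
    · rw [if_neg h1]
      by_cases h2 : i ≤ x ∧ x < n
      · have hx : x = i := by omega
        subst hx
        rw [if_pos h2, Equiv.swap_apply_left]
      · rw [if_neg h2, Equiv.swap_apply_of_ne_of_ne (by omega) (by omega)]

lemma kostkaZ_cyc_aux (shape : ℕ → ℕ) (hsh : Antitone shape) (n : ℕ) :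
    ∀ d i, i + d = n → ∀ c : ℕ → ℤ,
      kostkaZ shape (fun x => c (cyc i n x)) = kostkaZ shape c := by
  intro d
  induction d with
  | zero =>
    intro i hi c
    have hid : (fun x => c (cyc i n x)) = c := by
      funext x
      congr 1
      unfold cyc
      split_ifs with h1 h2 <;> omega
    rw [hid]
  | succ k ih =>
    intro i hi c
    have hstep : (fun x => c (cyc i n x))
        = (fun x => (fun y => c (Equiv.swap i (i+1) y)) (cyc (i+1) n x)) := by
      funext x
      exact congrArg c (cyc_step (by omega) x)
    rw [hstep]
    exact (ih (i+1) (by omega) (fun y => c (Equiv.swap i (i+1) y))).trans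
      (kostkaZ_swap shape hsh i c)

lemma kostkaZ_cyc (shape : ℕ → ℕ) (hsh : Antitone shape) {i n : ℕ} (hin : i ≤ n) (c : ℕ → ℤ) :
    kostkaZ shape (fun x => c (cyc i n x)) = kostkaZ shape c :=
  kostkaZ_cyc_aux shape hsh n (n - i) i (by omega) c

lemma kostkaZ_neg (shape : ℕ → ℕ) (c : ℕ → ℤ) (h : ∃ x, c x < 0) : kostkaZ shape c = 0 := by
  classical
  rw [kostkaZ, if_neg]
  push_neg
  obtain ⟨x, hx⟩ := h
  exact ⟨x, by omega⟩

section outer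

variable {n : ℕ}

lemma succAbove_coe (i : Fin (n+1)) (x : Fin n) :
    ((i.succAbove x : Fin (n+1)) : ℕ) = if (x : ℕ) < (i : ℕ) then (x : ℕ) else (x : ℕ) + 1 := by
  rw [Fin.succAbove]
  by_cases h : Fin.castSucc x < i
  · rw [if_pos h, if_pos (by exact_mod_cast h)]
    rfl
  · rw [if_neg h, if_neg (by rw [Fin.lt_def] at h; exact_mod_cast h)]
    rfl

noncomputable def pcyc (i : Fin (n+1)) : Perm (Fin (n+1)) :=
  Equiv.ofBijective (fun x => if h : (x : ℕ) < n then i.succAbove ⟨(x : ℕ), h⟩ else i)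
    (by
      rw [← Finite.injective_iff_bijective]
      intro x1 x2 h
      simp only at h
      split_ifs at h with h1 h2 h2
      · have := Fin.succAbove_right_injective (p := i) h
        exact Fin.ext (by exact_mod_cast congrArg Fin.val this)
      · exact absurd h (Fin.succAbove_ne i _)
      · exact absurd h.symm (Fin.succAbove_ne i _)
      · exact Fin.ext (by omega))

lemma pcyc_coe (i : Fin (n+1)) (x : Fin (n+1)) :
    ((pcyc i x : Fin (n+1)) : ℕ) = cyc (i : ℕ) n (x : ℕ) := by
  rw [pcyc, Equiv.ofBijective_apply]
  unfold cyc
  split_ifs with h1 h2 h3 h4 h5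
  · -- x < n and x = n : contradiction
    omega
  · -- x < n and i ≤ x < n
    rw [succAbove_coe]
    simp only [Fin.val_mk]
    split_ifs <;> omega
  · rw [succAbove_coe]
    simp only [Fin.val_mk]
    split_ifs <;> omega
  · rfl
  · omega
  · omega

lemma pcyc_inv_coe (i : Fin (n+1)) (y : Fin (n+1)) :
    (((pcyc i)⁻¹ y : Fin (n+1)) : ℕ) =
      if (y : ℕ) = (i : ℕ) then n else if (y : ℕ) < (i : ℕ) then (y : ℕ) else (y : ℕ) - 1 := by
  have h1 : pcyc i ((pcyc i)⁻¹ y) = y := Equiv.apply_symm_apply _ _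
  have h2 := congrArg Fin.val h1
  rw [pcyc_coe] at h2
  have hX : (((pcyc i)⁻¹ y : Fin (n+1)) : ℕ) ≤ n := Nat.lt_succ_iff.mp (Fin.is_lt _)
  have hy : (y : ℕ) ≤ n := Nat.lt_succ_iff.mp (Fin.is_lt _)
  have hi : (i : ℕ) ≤ n := Nat.lt_succ_iff.mp (Fin.is_lt _)
  unfold cyc at h2
  split_ifs at h2 <;> split_ifs <;> omega

end outer

section main
variable {n : ℕ}

lemma delta_val (t : Fin (n+1)) : deltaSeq (n+1) t = (n : ℤ) - ((t : ℕ) : ℤ) := by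
  rw [deltaSeq]; push_cast; ring

lemma low_block (v : Perm (Fin (n+1))) (i : Fin (n+1))
    (h1 : v⁻¹ i = i) (h2 : ∀ j : Fin (n+1), i < j → i < v⁻¹ j) :
    ∀ j : Fin (n+1), j < i → v⁻¹ j < i := by
  classical
  intro j hj
  by_contra hc
  push_neg at hc
  set Sge := Finset.univ.filter (fun t : Fin (n+1) => i ≤ t) with hS
  have hmaps : ∀ t ∈ Sge, v⁻¹ t ∈ Sge := by
    intro t ht
    rw [hS, Finset.mem_filter] at ht ⊢
    rcases eq_or_lt_of_le ht.2 with he | hlt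
    · exact ⟨Finset.mem_univ _, le_of_eq (by rw [← he, h1])⟩
    · exact ⟨Finset.mem_univ _, le_of_lt (h2 t hlt)⟩
  have himg : Sge.image (fun t => v⁻¹ t) = Sge := by
    apply Finset.eq_of_subset_of_card_le
    · intro y hy
      obtain ⟨t, ht, rfl⟩ := Finset.mem_image.mp hy
      exact hmaps t ht
    · rw [Finset.card_image_of_injective _ (Equiv.injective _)]
  have hmem : v⁻¹ j ∈ Sge := by
    rw [hS, Finset.mem_filter]
    exact ⟨Finset.mem_univ _, hc⟩
  rw [← himg] at hmem
  obtain ⟨t, ht, hteq⟩ := Finset.mem_image.mp hmem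
  have : t = j := (Equiv.injective _) hteq
  subst this
  rw [hS, Finset.mem_filter] at ht
  exact absurd ht.2 (not_le.mpr hj)

lemma exists_low (v : Perm (Fin (n+1))) (i : Fin (n+1))
    (h2 : ∀ j : Fin (n+1), i < j → i < v⁻¹ j) (h1 : i < v⁻¹ i) : False := by
  classical
  set Sge := Finset.univ.filter (fun t : Fin (n+1) => i ≤ t) with hS
  set Sgt := Finset.univ.filter (fun t : Fin (n+1) => i < t) with hS'
  have hmaps : ∀ t ∈ Sge, v⁻¹ t ∈ Sgt := by
    intro t ht
    rw [hS, Finset.mem_filter] at ht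
    rw [hS', Finset.mem_filter]
    rcases eq_or_lt_of_le ht.2 with he | hlt
    · exact ⟨Finset.mem_univ _, by rw [← he]; exact h1⟩
    · exact ⟨Finset.mem_univ _, h2 t hlt⟩
  have hsub : Sge.image (fun t => v⁻¹ t) ⊆ Sgt := by
    intro y hy
    obtain ⟨t, ht, rfl⟩ := Finset.mem_image.mp hy
    exact hmaps t ht
  have hssub : Sgt ⊂ Sge := by
    constructor
    · intro t ht
      rw [hS', Finset.mem_filter] at ht
      rw [hS, Finset.mem_filter]
      exact ⟨ht.1, le_of_lt ht.2⟩
    · intro hcon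
      have : i ∈ Sgt := hcon (by rw [hS, Finset.mem_filter]; exact ⟨Finset.mem_univ _, le_refl _⟩)
      rw [hS', Finset.mem_filter] at this
      exact absurd this.2 (lt_irrefl i)
  have h3 : Sge.card ≤ Sgt.card := by
    rw [← Finset.card_image_of_injective Sge (Equiv.injective (v⁻¹ : Perm (Fin (n+1))))]
    exact Finset.card_le_card hsub
  exact absurd h3 (not_le.mpr (Finset.card_lt_card hssub))

end main

lemma main_pt {n : ℕ} (μ ν : Fin (n + 1) → ℕ) (hμ : Antitone μ) (hν : Antitone ν)
    (i : Fin (n + 1)) (hi : μ i = ν i)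
    (μh νh : Fin (n + 1) → ℕ)
    (hμh : ∀ j : Fin (n + 1), μh j =
      if hj : (j : ℕ) < n then μ (i.succAbove ⟨(j : ℕ), hj⟩) else 0)
    (hνh : ∀ j : Fin (n + 1), νh j =
      if hj : (j : ℕ) < n then ν (i.succAbove ⟨(j : ℕ), hj⟩) else 0)
    (shape : ℕ → ℕ) (hshape : Antitone shape) (v : Perm (Fin (n + 1))) :
    kostkaZ shape (extendSeq (hatSeq μh νh ((pcyc i)⁻¹ * v * pcyc i)))
      = kostkaZ shape (extendSeq (hatSeq μ ν v)) := by
  classical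
  set u : Perm (Fin (n+1)) := (pcyc i)⁻¹ * v * pcyc i with hu
  have hin : (i : ℕ) ≤ n := Nat.lt_succ_iff.mp i.isLt
  have huinv : ∀ x : Fin (n+1), u⁻¹ x = (pcyc i)⁻¹ (v⁻¹ (pcyc i x)) := by
    intro x
    rw [hu]
    simp only [mul_inv_rev, inv_inv, Equiv.Perm.mul_apply]
  -- value helpers for the hatted rows
  have hμh_lt : ∀ t s : Fin (n+1), (t : ℕ) < (i : ℕ) → (s : ℕ) = (t : ℕ) → μh t = μ s := by
    intro t s ht hs
    rw [hμh t, dif_pos (lt_of_lt_of_le ht hin)]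
    exact congrArg μ (Fin.ext (by rw [succAbove_coe]; simp only [Fin.val_mk]; rw [if_pos ht, hs]))
  have hνh_lt : ∀ t s : Fin (n+1), (t : ℕ) < (i : ℕ) → (s : ℕ) = (t : ℕ) → νh t = ν s := by
    intro t s ht hs
    rw [hνh t, dif_pos (lt_of_lt_of_le ht hin)]
    exact congrArg ν (Fin.ext (by rw [succAbove_coe]; simp only [Fin.val_mk]; rw [if_pos ht, hs]))
  have hμh_mid : ∀ t s : Fin (n+1), (i : ℕ) ≤ (t : ℕ) → (ht : (t : ℕ) < n) →
      (s : ℕ) = (t : ℕ) + 1 → μh t = μ s := by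
    intro t s hit ht hs
    rw [hμh t, dif_pos ht]
    exact congrArg μ (Fin.ext (by
      rw [succAbove_coe]; simp only [Fin.val_mk]; rw [if_neg (by omega), hs]))
  have hνh_mid : ∀ t s : Fin (n+1), (i : ℕ) ≤ (t : ℕ) → (ht : (t : ℕ) < n) →
      (s : ℕ) = (t : ℕ) + 1 → νh t = ν s := by
    intro t s hit ht hs
    rw [hνh t, dif_pos ht]
    exact congrArg ν (Fin.ext (by
      rw [succAbove_coe]; simp only [Fin.val_mk]; rw [if_neg (by omega), hs]))
  have hμh_top : ∀ t : Fin (n+1), (t : ℕ) = n → μh t = 0 := by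
    intro t ht
    rw [hμh t, dif_neg (by omega)]
  have hνh_top : ∀ t : Fin (n+1), (t : ℕ) = n → νh t = 0 := by
    intro t ht
    rw [hνh t, dif_neg (by omega)]
  by_cases hA : v⁻¹ i = i ∧ ∀ j : Fin (n+1), i < j → i < v⁻¹ j
  · -- block preserving case: the contents agree up to the cycle
    obtain ⟨hA1, hA2⟩ := hA
    have hlow := low_block v i hA1 hA2
    have key : extendSeq (hatSeq μh νh u)
        = fun x => extendSeq (hatSeq μ ν v) (cyc (i : ℕ) n x) := by
      funext x
      rcases lt_or_ge x (n+1) with hx | hx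
      · by_cases hxi : x < (i : ℕ)
        · -- low region
          have hcyc : cyc (i : ℕ) n x = x := by unfold cyc; split_ifs <;> omega
          have hπ : pcyc i ⟨x, hx⟩ = ⟨x, hx⟩ :=
            Fin.ext (by rw [pcyc_coe]; simp only [Fin.val_mk]; unfold cyc; split_ifs <;> omega)
          set K : Fin (n+1) := v⁻¹ ⟨x, hx⟩ with hK
          have hKi : K < i := hlow ⟨x, hx⟩ (by rw [Fin.lt_def]; exact hxi)
          have hKi' : (K : ℕ) < (i : ℕ) := Fin.lt_def.mp hKi
          have hcoeU : ((u⁻¹ ⟨x, hx⟩ : Fin (n+1)) : ℕ) = (K : ℕ) := by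
            rw [huinv, hπ, ← hK, pcyc_inv_coe, if_neg (by omega), if_pos hKi']
          have hL : hatSeq μh νh u ⟨x, hx⟩
              = ((μ ⟨x, hx⟩ : ℤ) + ((n : ℤ) - (x : ℤ)))
                - ((ν K : ℤ) + ((n : ℤ) - ((K : ℕ) : ℤ))) := by
            rw [hatSeq, delta_val, delta_val, hcoeU,
              hμh_lt ⟨x, hx⟩ ⟨x, hx⟩ (by simpa using hxi) rfl,
              hνh_lt (u⁻¹ ⟨x, hx⟩) K (by omega) hcoeU.symm]
          rw [extendSeq, hcyc]
          simp only [extendSeq]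
          rw [dif_pos hx, dif_pos hx, hL, hatSeq, delta_val, delta_val, ← hK]
        · by_cases hxn : x < n
          · -- middle region
            have hcyc : cyc (i : ℕ) n x = x + 1 := by unfold cyc; split_ifs <;> omega
            have hxs : x + 1 < n + 1 := by omega
            have hπ : pcyc i ⟨x, hx⟩ = ⟨x + 1, hxs⟩ :=
              Fin.ext (by rw [pcyc_coe]; simp only [Fin.val_mk]; unfold cyc; split_ifs <;> omega)
            set K : Fin (n+1) := v⁻¹ ⟨x + 1, hxs⟩ with hK
            have hKi : i < K := hA2 ⟨x + 1, hxs⟩ (by rw [Fin.lt_def]; simp only [Fin.val_mk]; omega)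
            have hKi' : (i : ℕ) < (K : ℕ) := Fin.lt_def.mp hKi
            have hKn : (K : ℕ) ≤ n := Nat.lt_succ_iff.mp K.isLt
            have hcoeU : ((u⁻¹ ⟨x, hx⟩ : Fin (n+1)) : ℕ) = (K : ℕ) - 1 := by
              rw [huinv, hπ, ← hK, pcyc_inv_coe, if_neg (by omega), if_neg (by omega)]
            have hL : hatSeq μh νh u ⟨x, hx⟩
                = ((μ ⟨x + 1, hxs⟩ : ℤ) + ((n : ℤ) - (x : ℤ)))
                  - ((ν K : ℤ) + ((n : ℤ) - (((K : ℕ) - 1 : ℕ) : ℤ))) := by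
              rw [hatSeq, delta_val, delta_val, hcoeU,
                hμh_mid ⟨x, hx⟩ ⟨x + 1, hxs⟩ (by simpa using not_lt.mp hxi)
                  (by simpa using hxn) (by simp),
                hνh_mid (u⁻¹ ⟨x, hx⟩) K (by omega) (by omega) (by omega)]
            rw [extendSeq, hcyc]
            simp only [extendSeq]
            rw [dif_pos hx, dif_pos hxs, hL, hatSeq, delta_val, delta_val, ← hK]
            simp only [Fin.val_mk]
            push_cast
            omega
          · -- top region : x = n
            have hxn' : x = n := by omega
            have hcyc : cyc (i : ℕ) n x = (i : ℕ) := by unfold cyc; split_ifs <;> omega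
            have hπ : pcyc i ⟨x, hx⟩ = i :=
              Fin.ext (by rw [pcyc_coe]; simp only [Fin.val_mk]; unfold cyc; split_ifs <;> omega)
            have hcoeU : ((u⁻¹ ⟨x, hx⟩ : Fin (n+1)) : ℕ) = n := by
              rw [huinv, hπ, hA1, pcyc_inv_coe, if_pos rfl]
            have hL : hatSeq μh νh u ⟨x, hx⟩ = 0 := by
              rw [hatSeq, delta_val, delta_val, hcoeU,
                hμh_top ⟨x, hx⟩ (by simpa using hxn'),
                hνh_top (u⁻¹ ⟨x, hx⟩) hcoeU]
              simp only [Fin.val_mk]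
              push_cast
              omega
            rw [extendSeq, hcyc]
            simp only [extendSeq]
            rw [dif_pos hx, dif_pos i.isLt, hL]
            have heq : (⟨(i : ℕ), i.isLt⟩ : Fin (n+1)) = i := Fin.ext rfl
            rw [heq, hatSeq, hA1, delta_val, hi]
            ring
      · -- outside the support
        have hcyc : cyc (i : ℕ) n x = x := by unfold cyc; split_ifs <;> omega
        rw [extendSeq, hcyc]
        simp only [extendSeq]
        rw [dif_neg (by omega), dif_neg (by omega)]
    rw [key, kostkaZ_cyc shape hshape hin]
  · -- non block preserving: both sides vanish
    rw [kostkaZ_neg shape _ ?_, kostkaZ_neg shape _ ?_]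
    case _ => -- original content has a negative entry
      by_cases hex : ∃ j : Fin (n+1), i < j ∧ v⁻¹ j ≤ i
      · obtain ⟨j, hj1, hj2⟩ := hex
        refine ⟨(j : ℕ), ?_⟩
        rw [extendSeq, dif_pos j.isLt]
        have heq : (⟨(j : ℕ), j.isLt⟩ : Fin (n+1)) = j := Fin.ext rfl
        rw [heq, hatSeq, delta_val, delta_val]
        have h1 : μ j ≤ μ i := hμ (le_of_lt hj1)
        have h2 : ν i ≤ ν (v⁻¹ j) := hν hj2
        have h3 : ((v⁻¹ j : Fin (n+1)) : ℕ) ≤ (i : ℕ) := Fin.le_def.mp hj2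
        have h4 : (i : ℕ) < (j : ℕ) := Fin.lt_def.mp hj1
        omega
      · push_neg at hex
        rcases lt_or_gt_of_ne (fun he : v⁻¹ i = i => hA ⟨he, hex⟩) with hlt | hgt
        · refine ⟨(i : ℕ), ?_⟩
          rw [extendSeq, dif_pos i.isLt]
          have heq : (⟨(i : ℕ), i.isLt⟩ : Fin (n+1)) = i := Fin.ext rfl
          rw [heq, hatSeq, delta_val, delta_val]
          have h2 : ν i ≤ ν (v⁻¹ i) := hν (le_of_lt hlt)
          have h3 : ((v⁻¹ i : Fin (n+1)) : ℕ) < (i : ℕ) := Fin.lt_def.mp hlt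
          omega
        · exact absurd (exists_low v i hex hgt) (by simp)
    case _ => -- hatted content has a negative entry
      by_cases hfix : v⁻¹ i = i
      · have hex : ∃ j : Fin (n+1), i < j ∧ v⁻¹ j ≤ i := by
          by_contra hc
          push_neg at hc
          exact hA ⟨hfix, hc⟩
        obtain ⟨j, hj1, hj2⟩ := hex
        have hj2' : v⁻¹ j < i := by
          rcases eq_or_lt_of_le hj2 with he | h
          · exact absurd (Equiv.injective _ (he.trans hfix.symm)) (ne_of_gt hj1)
          · exact h
        set K : Fin (n+1) := v⁻¹ j with hK
        have hKi : (K : ℕ) < (i : ℕ) := Fin.lt_def.mp hj2'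
        have hij : (i : ℕ) < (j : ℕ) := Fin.lt_def.mp hj1
        have hjn : (j : ℕ) ≤ n := Nat.lt_succ_iff.mp j.isLt
        have hxlt : (j : ℕ) - 1 < n + 1 := by omega
        refine ⟨(j : ℕ) - 1, ?_⟩
        rw [extendSeq, dif_pos hxlt]
        have hπ : pcyc i ⟨(j : ℕ) - 1, hxlt⟩ = j :=
          Fin.ext (by rw [pcyc_coe]; simp only [Fin.val_mk]; unfold cyc; split_ifs <;> omega)
        have hcoeU : ((u⁻¹ ⟨(j : ℕ) - 1, hxlt⟩ : Fin (n+1)) : ℕ) = (K : ℕ) := by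
          rw [huinv, hπ, ← hK, pcyc_inv_coe, if_neg (by omega), if_pos hKi]
        have h1 : μ j ≤ μ i := hμ (le_of_lt hj1)
        have h2 : ν i ≤ ν K := hν (le_of_lt hj2')
        rw [hatSeq, delta_val, delta_val, hcoeU,
          hμh_mid ⟨(j : ℕ) - 1, hxlt⟩ j (by simp; omega) (by simp; omega) (by simp; omega),
          hνh_lt (u⁻¹ ⟨(j : ℕ) - 1, hxlt⟩) K (by omega) hcoeU.symm]
        simp only [Fin.val_mk]
        omega
      · -- v⁻¹ i ≠ i : negative entry at position n
        set K0 : Fin (n+1) := v⁻¹ i with hK0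
        have hK0n : (K0 : ℕ) ≤ n := Nat.lt_succ_iff.mp K0.isLt
        have hK0i : (K0 : ℕ) ≠ (i : ℕ) := fun he => hfix (Fin.ext he)
        have hnn : (n : ℕ) < n + 1 := by omega
        have hπ : pcyc i ⟨n, hnn⟩ = i :=
          Fin.ext (by rw [pcyc_coe]; simp only [Fin.val_mk]; unfold cyc; split_ifs <;> omega)
        have hcoeU : ((u⁻¹ ⟨n, hnn⟩ : Fin (n+1)) : ℕ) < n := by
          rw [huinv, hπ, ← hK0, pcyc_inv_coe, if_neg hK0i]
          split_ifs <;> omega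
        refine ⟨n, ?_⟩
        rw [extendSeq, dif_pos hnn]
        rw [hatSeq, delta_val, delta_val, hμh_top ⟨n, hnn⟩ (by simp)]
        have h0 : (0 : ℤ) ≤ (νh (u⁻¹ ⟨n, hnn⟩) : ℤ) := Int.natCast_nonneg _
        simp only [Fin.val_mk]
        omega


/-- Proposition A.2 / Proposition 3.1: if `μ_i = ν_i` then
the immanant characters of `μ/ν` and of `μ̂/ν̂` (the shape with the `i`-th row
removed and a zero row appended) agree, for every partition shape `θ`. -/
theorem stmt12 {n : ℕ} (μ ν : Fin (n + 1) → ℕ) (hμ : Antitone μ) (hν : Antitone ν)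
    (hle : ∀ j, ν j ≤ μ j) (i : Fin (n + 1)) (hi : μ i = ν i)
    (μh νh : Fin (n + 1) → ℕ)
    (hμh : ∀ j : Fin (n + 1), μh j =
      if hj : (j : ℕ) < n then μ (i.succAbove ⟨(j : ℕ), hj⟩) else 0)
    (hνh : ∀ j : Fin (n + 1), νh j =
      if hj : (j : ℕ) < n then ν (i.succAbove ⟨(j : ℕ), hj⟩) else 0)
    (shape : ℕ → ℕ) (hshape : Antitone shape) (w : Perm (Fin (n + 1))) :
    GammaTheta shape μ ν w = GammaTheta shape μh νh w := by
  classical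
  unfold GammaTheta
  congr 1
  set π : Perm (Fin (n+1)) := pcyc i with hπ
  have hconj : ∀ v : Perm (Fin (n+1)), IsConj v (π⁻¹ * v * π) := by
    intro v
    rw [isConj_iff]
    exact ⟨π⁻¹, by group⟩
  refine Finset.sum_equiv
    ⟨fun v => π⁻¹ * v * π, fun u => π * u * π⁻¹,
      fun v => by group, fun u => by group⟩ ?_ ?_
  · intro v
    simp only [conjClass, Finset.mem_filter, Finset.mem_univ, true_and, Equiv.coe_fn_mk]
    constructor
    · intro h
      exact h.trans (hconj v)
    · intro h
      exact h.trans (hconj v).symm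
  · intro v hv
    simp only [Equiv.coe_fn_mk]
    have := main_pt μ ν hμ hν i hi μh νh hμh hνh shape hshape v
    exact_mod_cast this.symm
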